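/- arXiv:1212.4588 — 2 statements merged into one kernel-verified Lean document; each statement's English description precedes it below -/
import Mathlib

section
/- The linear recursion x_{n+1} = x_n − α x_{n−2} (two-step-delay feedback with no noise) is asymptotically stable if and only if 0 < α < (√5 − 1)/2; in particular the critical gain is α* = (√5 − 1)/2 ≈ 0.62. -/
set_option maxHeartbeats 1600000 in
/-- The two-step-delay linear recursion `x_{n+1} = x_n − α x_{n−2}` is
asymptotically stable (all roots of `z³ − z² + α` lie strictly inside the
unit circle) iff `0 < α < (√5 − 1)/2`. -/
theorem two_step_delay_stability (α : ℝ) :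
    (∀ z : ℂ, z^3 - z^2 + (α : ℂ) = 0 → ‖z‖ < 1) ↔
      (0 < α ∧ α < (Real.sqrt 5 - 1) / 2) := by
  have hs5 : Real.sqrt 5 ^ 2 = 5 := Real.sq_sqrt (by norm_num)
  have hs0 : (0:ℝ) ≤ Real.sqrt 5 := Real.sqrt_nonneg 5
  have hs2 : (2:ℝ) < Real.sqrt 5 := by nlinarith
  have hs3 : Real.sqrt 5 < 3 := by nlinarith
  constructor
  · intro h
    have hpos : 0 < α := by
      by_contra hα
      push_neg at hα
      have hle : (1:ℝ) ≤ 2 + |α| := by nlinarith [abs_nonneg α]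
      have hcont : ContinuousOn (fun x : ℝ => x^3 - x^2 + α) (Set.Icc 1 (2 + |α|)) := by
        fun_prop
      have hmem : (0:ℝ) ∈ Set.Icc ((fun x : ℝ => x^3 - x^2 + α) 1)
          ((fun x : ℝ => x^3 - x^2 + α) (2 + |α|)) := by
        constructor
        · simpa using hα
        · simp only
          nlinarith [abs_nonneg α, neg_abs_le α, sq_nonneg (|α|)]
      obtain ⟨x, hxmem, hxval⟩ := intermediate_value_Icc hle hcont hmem
      simp only at hxval
      have hroot : (x:ℂ)^3 - (x:ℂ)^2 + (α:ℂ) = 0 := by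
        exact_mod_cast congrArg (Complex.ofReal) hxval
      have hlt := h x hroot
      rw [Complex.norm_real, Real.norm_eq_abs, abs_lt] at hlt
      linarith [hlt.2, hxmem.1]
    refine ⟨hpos, ?_⟩
    by_contra hα
    push_neg at hα
    set s : ℝ := Real.sqrt 5 with hsdef
    set x0 : ℝ := (1 + s) / 4 with hx0
    have hg0 : 2*x0*(2*x0-1)^2 = (s - 1)/2 := by
      rw [hx0]; linear_combination ((s - 1)/8) * hs5
    have hle : x0 ≤ 1 + α := by rw [hx0]; nlinarith
    have hcont : ContinuousOn (fun x : ℝ => 2*x*(2*x-1)^2) (Set.Icc x0 (1 + α)) := by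
      fun_prop
    have hmem : α ∈ Set.Icc ((fun x : ℝ => 2*x*(2*x-1)^2) x0)
        ((fun x : ℝ => 2*x*(2*x-1)^2) (1 + α)) := by
      constructor
      · simp only [hg0]; exact hα
      · simp only
        nlinarith [sq_nonneg α, hpos]
    obtain ⟨x, hxmem, hxval⟩ := intermediate_value_Icc hle hcont hmem
    simp only at hxval
    have hxge : x0 ≤ x := hxmem.1
    have hxge' : 1 + s ≤ 4 * x := by rw [hx0] at hxge; linarith
    have hy2 : (0:ℝ) ≤ 3*x^2 - 2*x := by nlinarith
    set y : ℝ := Real.sqrt (3*x^2 - 2*x) with hy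
    have hy2' : y^2 = 3*x^2 - 2*x := Real.sq_sqrt hy2
    have hzre : (⟨x, y⟩ : ℂ).re = x := rfl
    have hzim : (⟨x, y⟩ : ℂ).im = y := rfl
    have hroot : (⟨x, y⟩ : ℂ)^3 - (⟨x, y⟩ : ℂ)^2 + (α:ℂ) = 0 := by
      rw [Complex.ext_iff]
      simp only [pow_succ, pow_zero, one_mul, Complex.mul_re, Complex.mul_im,
        Complex.add_re, Complex.add_im, Complex.sub_re, Complex.sub_im,
        Complex.ofReal_re, Complex.ofReal_im, Complex.zero_re, Complex.zero_im,
        hzre, hzim]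
      constructor
      · linear_combination (1 - 3*x) * hy2' - hxval
      · linear_combination (-y) * hy2'
    have hnorm := h ⟨x, y⟩ hroot
    have habs : ‖(⟨x, y⟩ : ℂ)‖^2 = x^2 + y^2 := by
      rw [Complex.sq_norm]
      simp [Complex.normSq_apply, sq]
    have hlt1 : x^2 + y^2 < 1 := by
      nlinarith [norm_nonneg (⟨x, y⟩ : ℂ)]
    have hd : (0:ℝ) ≤ 4*x - 1 - s := by linarith
    nlinarith [mul_nonneg hd (show (0:ℝ) ≤ 4*x - 1 + s by linarith), hy2']
  · rintro ⟨h1, h2⟩ z hz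
    by_contra hn
    push_neg at hn
    obtain ⟨x, y⟩ := z
    have habs : ‖(⟨x, y⟩ : ℂ)‖^2 = x^2 + y^2 := by
      rw [Complex.sq_norm]
      simp [Complex.normSq_apply, sq]
    have hge1 : 1 ≤ x^2 + y^2 := by nlinarith [norm_nonneg (⟨x, y⟩ : ℂ)]
    have hre := congrArg Complex.re hz
    have him := congrArg Complex.im hz
    simp only [pow_succ, pow_zero, one_mul, Complex.mul_re, Complex.mul_im,
      Complex.add_re, Complex.add_im, Complex.sub_re, Complex.sub_im,
      Complex.ofReal_re, Complex.ofReal_im, Complex.zero_re, Complex.zero_im] at hre him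
    rcases eq_or_ne y 0 with hy0 | hy0
    · rw [hy0] at hre hge1
      nlinarith [sq_nonneg (x+1), sq_nonneg (x-1), sq_nonneg x]
    · have hy2 : y^2 = 3*x^2 - 2*x := by
        have h' : y * (3*x^2 - y^2 - 2*x) = 0 := by linear_combination him
        rcases mul_eq_zero.mp h' with h' | h'
        · exact absurd h' hy0
        · linarith
      have hα : α = 8*x^3 - 8*x^2 + 2*x := by linear_combination hre + (3*x - 1) * hy2
      have h4 : (1:ℝ) ≤ 4*x^2 - 2*x := by nlinarith [hy2, hge1]
      clear hre him hz habs hn hy0 hy2 hge1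
      obtain ⟨s, hsdef⟩ : ∃ s : ℝ, Real.sqrt 5 = s := ⟨_, rfl⟩
      rw [hsdef] at hs5 hs0 hs2 hs3 h2
      have hs5' : s^3 = 5*s := by rw [pow_succ, hs5]
      have hxpos : 0 < x := by
        by_contra hx
        push_neg at hx
        nlinarith [mul_nonneg (neg_nonneg.mpr hx) (sq_nonneg (2*x-1))]
      have hx12 : (1:ℝ)/2 ≤ x := by nlinarith
      have hd : (0:ℝ) ≤ 4*x - 1 - s := by nlinarith
      have hxs : x * s^2 = x * 5 := by rw [hs5]
      have T1 : (0:ℝ) ≤ (4*x-1-s)^3 := pow_nonneg hd 3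
      have T2 : (0:ℝ) ≤ (4*x-1-s)^2 * (3*s-1) := mul_nonneg (sq_nonneg _) (by linarith)
      have T3 : (0:ℝ) ≤ (4*x-1-s) * (14-2*s) :=
        mul_nonneg hd (by linarith)
      have key : (s - 1)/2 ≤ α := by
        rw [hα]
        linarith [T1, T2, T3, hs5, hs5', hxs]
      linarith
end

section
/- With exposure window [t_{n+1} − t_d − t_c/2, t_{n+1} − t_d + t_c/2] straddling the force switch at t_n (with the force F_{n−1} before t_n and F_n after), the camera-averaged position is x_n + (t_c/(8γ))(a₊ F_n − a₋ F_{n−1}), where a_± = [1 ± 2(t_s − t_d)/t_c]². Moreover, when t_d = t_s this reduces to x_n + (t_c/(8γ))(F_n − F_{n−1}). -/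
/-- General-delay camera average: with exposure window
`[t_{n+1} − t_d − t_c/2, t_{n+1} − t_d + t_c/2]` straddling the force switch
at `tₙ = t_{n+1} − tₛ`, the camera-averaged position is
`xₙ + (t_c/(8γ))(a₊ Fₙ − a₋ Fₙ₋₁)` with `a_± = (1 ± 2(tₛ − t_d)/t_c)²`;
when `t_d = tₛ` this reduces to `xₙ + (t_c/(8γ))(Fₙ − Fₙ₋₁)`. -/
theorem camera_average_bias_general_delay
    (γ tc ts td tnp1 xn Fp Fn : ℝ) (hγ : 0 < γ) (htc : 0 < tc)
    (hts : 0 < ts) (htd : 0 < td) (hstraddle : |ts - td| ≤ tc / 2) :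
    ((1 / tc) * ∫ t in (tnp1 - td - tc/2)..(tnp1 - td + tc/2),
        (if t ≤ tnp1 - ts then xn - (Fp / γ) * ((tnp1 - ts) - t)
         else xn + (Fn / γ) * (t - (tnp1 - ts)))
      = xn + (tc / (8 * γ)) *
          ((1 + 2*(ts - td)/tc)^2 * Fn - (1 - 2*(ts - td)/tc)^2 * Fp))
    ∧ (td = ts →
        (1 / tc) * ∫ t in (tnp1 - td - tc/2)..(tnp1 - td + tc/2),
          (if t ≤ tnp1 - ts then xn - (Fp / γ) * ((tnp1 - ts) - t)
           else xn + (Fn / γ) * (t - (tnp1 - ts)))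
        = xn + (tc / (8 * γ)) * (Fn - Fp)) := by
  rw [abs_le] at hstraddle
  set a := tnp1 - td - tc/2 with ha
  set b := tnp1 - td + tc/2 with hb
  set m := tnp1 - ts with hm
  have ham : a ≤ m := by simp only [ha, hm]; linarith [hstraddle.2]
  have hmb : m ≤ b := by simp only [hb, hm]; linarith [hstraddle.1]
  set f : ℝ → ℝ := fun t => if t ≤ m then xn - (Fp / γ) * (m - t)
      else xn + (Fn / γ) * (t - m) with hf
  have eq1 : Set.EqOn f (fun t => xn - (Fp / γ) * (m - t)) (Set.uIcc a m) := by
    intro t ht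
    rw [Set.uIcc_of_le ham] at ht
    exact if_pos ht.2
  have eq2 : Set.EqOn f (fun t => xn + (Fn / γ) * (t - m)) (Set.uIcc m b) := by
    intro t ht
    rw [Set.uIcc_of_le hmb] at ht
    by_cases h : t ≤ m
    · have : t = m := le_antisymm h ht.1
      simp [hf, this]
    · exact if_neg h
  have int1 : IntervalIntegrable f MeasureTheory.volume a m := by
    apply IntervalIntegrable.congr_ae (f := fun t => xn - (Fp / γ) * (m - t))
    · exact (by fun_prop : Continuous fun t : ℝ => xn - (Fp / γ) * (m - t)).intervalIntegrable a m
    · exact (MeasureTheory.ae_restrict_of_forall_mem measurableSet_uIoc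
        fun t ht => (eq1 (Set.uIoc_subset_uIcc ht)).symm)
  have int2 : IntervalIntegrable f MeasureTheory.volume m b := by
    apply IntervalIntegrable.congr_ae (f := fun t => xn + (Fn / γ) * (t - m))
    · exact (by fun_prop : Continuous fun t : ℝ => xn + (Fn / γ) * (t - m)).intervalIntegrable m b
    · exact (MeasureTheory.ae_restrict_of_forall_mem measurableSet_uIoc
        fun t ht => (eq2 (Set.uIoc_subset_uIcc ht)).symm)
  have hsplit : ∫ t in a..b, f t = (∫ t in a..m, f t) + ∫ t in m..b, f t :=
    (intervalIntegral.integral_add_adjacent_intervals int1 int2).symm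
  have hv1 : ∫ t in a..m, f t = xn * (m - a) - (Fp / γ) * ((m - a)^2 / 2) := by
    rw [intervalIntegral.integral_congr eq1]
    have : ∀ t : ℝ, xn - (Fp / γ) * (m - t) = (xn - (Fp / γ) * m) + (Fp / γ) * t := by
      intro t; ring
    simp only [this]
    rw [intervalIntegral.integral_add intervalIntegrable_const
        ((continuous_const_mul (Fp / γ)).intervalIntegrable a m),
      intervalIntegral.integral_const, intervalIntegral.integral_const_mul,
      integral_id, smul_eq_mul]
    ring
  have hv2 : ∫ t in m..b, f t = xn * (b - m) + (Fn / γ) * ((b - m)^2 / 2) := by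
    rw [intervalIntegral.integral_congr eq2]
    have : ∀ t : ℝ, xn + (Fn / γ) * (t - m) = (xn - (Fn / γ) * m) + (Fn / γ) * t := by
      intro t; ring
    simp only [this]
    rw [intervalIntegral.integral_add intervalIntegrable_const
        ((continuous_const_mul (Fn / γ)).intervalIntegrable m b),
      intervalIntegral.integral_const, intervalIntegral.integral_const_mul,
      integral_id, smul_eq_mul]
    ring
  have key : (1 / tc) * ∫ t in a..b, f t
      = xn + (tc / (8 * γ)) * ((1 + 2*(ts - td)/tc)^2 * Fn - (1 - 2*(ts - td)/tc)^2 * Fp) := by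
    rw [hsplit, hv1, hv2, ha, hb, hm]
    field_simp
    ring
  refine ⟨key, fun htd => ?_⟩
  rw [key, htd]
  norm_num
end
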